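/- For t ≥ 0 and u > 0, the partial sums Φ_n(t,u) = ∑_{m=0}^{n} ((-t)^m e^{−u}/m!)(u^{2m} − 2m u^{2m−1} − 2m u^{2m−2}) of the DJM series for the breakage equation with S(v) = v^2, B(u,v) = 2/v and initial data e^{−u} satisfy: for every fixed t ≥ 0 and every compact set of volumes [a,b] ⊂ (0,∞), Φ_n converges uniformly on [a,b] to (1+2t+2tu) e^{−u(1+tu)} as n → ∞. -/

import Mathlib

open Filter

private lemma aux_le_pow5 (m : ℕ) : (1 : ℝ) + 4 * m ≤ 5 ^ m := by
  induction m with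
  | zero => norm_num
  | succ k ih =>
    have h5 : (1:ℝ) ≤ 5 ^ k := one_le_pow₀ (by norm_num)
    push_cast
    push_cast at ih
    calc (1 : ℝ) + 4 * (k + 1) = (1 + 4 * k) + 4 := by ring
      _ ≤ 5 ^ k + 4 * 5 ^ k := by linarith
      _ = 5 ^ (k + 1) := by ring

private lemma aux_tsum_eq (t : ℝ) (u : ℝ) (hu : 0 < u) :
    ∑' m : ℕ, ((-t) ^ m * Real.exp (-u) / m.factorial) *
        (u ^ (2 * m) - 2 * m * u ^ (2 * m - 1) - 2 * m * u ^ (2 * m - 2)) =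
      (1 + 2 * t + 2 * t * u) * Real.exp (-u * (1 + t * u)) := by
  set F : ℕ → ℝ := fun m => (-(t * u ^ 2)) ^ m / m.factorial * Real.exp (-u) with hF
  set G : ℕ → ℝ := fun m => match m with
    | 0 => 0
    | k + 1 => F k
  have hFsum : Summable F :=
    (Real.summable_pow_div_factorial (-(t * u ^ 2))).mul_right _
  have hGsum : Summable G := by
    rw [← summable_nat_add_iff 1]
    exact hFsum
  have hfeq : ∀ m : ℕ,
      ((-t) ^ m * Real.exp (-u) / m.factorial) *
          (u ^ (2 * m) - 2 * m * u ^ (2 * m - 1) - 2 * m * u ^ (2 * m - 2)) =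
        F m + (2 * t + 2 * t * u) * G m := by
    intro m
    match m with
    | 0 => simp [F, G]
    | k + 1 =>
      show _ = F (k + 1) + (2 * t + 2 * t * u) * F k
      have h1 : 2 * (k + 1) - 1 = 2 * k + 1 := by omega
      have h2 : 2 * (k + 1) - 2 = 2 * k := by omega
      have h3 : 2 * (k + 1) = 2 * k + 2 := by omega
      rw [h1, h2, h3]
      have hfac : ((k + 1).factorial : ℝ) = (k + 1) * k.factorial := by
        rw [Nat.factorial_succ]; push_cast; ring
      have hk0 : (k.factorial : ℝ) ≠ 0 := Nat.cast_ne_zero.mpr k.factorial_ne_zero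
      have hk1 : ((k : ℝ) + 1) ≠ 0 := by positivity
      simp only [F, hfac]
      push_cast
      field_simp
      ring
  have htsumF : ∑' m, F m = Real.exp (-(t * u ^ 2)) * Real.exp (-u) := by
    rw [hF, tsum_mul_right]
    congr 1
    rw [Real.exp_eq_exp_ℝ, NormedSpace.exp_eq_tsum_div]
  have htsumG : ∑' m, G m = Real.exp (-(t * u ^ 2)) * Real.exp (-u) := by
    rw [Summable.tsum_eq_zero_add hGsum]
    show (0 : ℝ) + ∑' m, F m = _
    rw [zero_add, htsumF]
  calc ∑' m : ℕ, ((-t) ^ m * Real.exp (-u) / m.factorial) *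
        (u ^ (2 * m) - 2 * m * u ^ (2 * m - 1) - 2 * m * u ^ (2 * m - 2))
      = ∑' m, (F m + (2 * t + 2 * t * u) * G m) := by
        exact tsum_congr hfeq
    _ = (∑' m, F m) + (2 * t + 2 * t * u) * ∑' m, G m := by
        rw [Summable.tsum_add hFsum (hGsum.mul_left _), tsum_mul_left]
    _ = (1 + 2 * t + 2 * t * u) * Real.exp (-u * (1 + t * u)) := by
        rw [htsumF, htsumG, ← Real.exp_add]
        have : -(t * u ^ 2) + -u = -u * (1 + t * u) := by ring
        rw [this]; ring

/-- Uniform convergence on compact volume sets of the DJM partial sums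
`Φ_n(t,u) = ∑_{m=0}^n ((-t)^m e^{-u}/m!)(u^{2m} - 2m u^{2m-1} - 2m u^{2m-2})`
to the exact solution `(1+2t+2tu) e^{-u(1+tu)}` of the breakage equation with
`S(v)=v^2`, `B(u,v)=2/v` and initial datum `e^{-u}`. -/
theorem djm_partial_sums_tendstoUniformlyOn_quadratic_selection
    (t : ℝ) (ht : 0 ≤ t) (a b : ℝ) (ha : 0 < a) (hab : a ≤ b) :
    TendstoUniformlyOn
      (fun n u => ∑ m ∈ Finset.range (n + 1),
        ((-t) ^ m * Real.exp (-u) / m.factorial) *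
          (u ^ (2 * m) - 2 * m * u ^ (2 * m - 1) - 2 * m * u ^ (2 * m - 2)))
      (fun u => (1 + 2 * t + 2 * t * u) * Real.exp (-u * (1 + t * u)))
      atTop (Set.Icc a b) := by
  set M : ℝ := max 1 b with hM
  have hM1 : (1 : ℝ) ≤ M := le_max_left _ _
  have hMb : b ≤ M := le_max_right _ _
  set f : ℕ → ℝ → ℝ := fun m u =>
    ((-t) ^ m * Real.exp (-u) / m.factorial) *
      (u ^ (2 * m) - 2 * m * u ^ (2 * m - 1) - 2 * m * u ^ (2 * m - 2)) with hf
  have hbound : ∀ m : ℕ, ∀ u ∈ Set.Icc a b,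
      ‖f m u‖ ≤ (5 * (t * M ^ 2)) ^ m / m.factorial := by
    intro m u hu
    obtain ⟨hua, hub⟩ := hu
    have hu0 : 0 < u := lt_of_lt_of_le ha hua
    have huM : u ≤ M := le_trans hub hMb
    have hpow : ∀ k : ℕ, u ^ k ≤ M ^ k := fun k =>
      pow_le_pow_left₀ hu0.le huM k
    have hpowM : ∀ k : ℕ, k ≤ 2 * m → u ^ k ≤ M ^ (2 * m) := by
      intro k hk
      exact le_trans (hpow k) (pow_le_pow_right₀ hM1 hk)
    have hexp : Real.exp (-u) ≤ 1 := Real.exp_le_one_iff.mpr (by linarith)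
    have hexp0 : 0 < Real.exp (-u) := Real.exp_pos _
    have habs : |u ^ (2 * m) - 2 * m * u ^ (2 * m - 1) - 2 * m * u ^ (2 * m - 2)|
        ≤ (1 + 4 * m) * M ^ (2 * m) := by
      have h1 : |u ^ (2 * m)| ≤ M ^ (2 * m) := by
        rw [abs_of_nonneg (by positivity)]; exact hpowM _ le_rfl
      have h2 : |2 * (m : ℝ) * u ^ (2 * m - 1)| ≤ 2 * m * M ^ (2 * m) := by
        rw [abs_of_nonneg (by positivity)]
        have := hpowM (2 * m - 1) (by omega)
        have hm0 : (0 : ℝ) ≤ 2 * m := by positivity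
        nlinarith
      have h3 : |2 * (m : ℝ) * u ^ (2 * m - 2)| ≤ 2 * m * M ^ (2 * m) := by
        rw [abs_of_nonneg (by positivity)]
        have := hpowM (2 * m - 2) (by omega)
        have hm0 : (0 : ℝ) ≤ 2 * m := by positivity
        nlinarith
      calc |u ^ (2 * m) - 2 * m * u ^ (2 * m - 1) - 2 * m * u ^ (2 * m - 2)|
          ≤ |u ^ (2 * m)| + |2 * (m : ℝ) * u ^ (2 * m - 1)|
            + |2 * (m : ℝ) * u ^ (2 * m - 2)| := by
            exact (abs_sub _ _).trans (by gcongr; exact abs_sub _ _)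
        _ ≤ M ^ (2 * m) + 2 * m * M ^ (2 * m) + 2 * m * M ^ (2 * m) := by
            linarith
        _ = (1 + 4 * m) * M ^ (2 * m) := by ring
    have hfac0 : (0 : ℝ) < m.factorial := by positivity
    rw [hf]
    rw [Real.norm_eq_abs, abs_mul, abs_div, abs_mul, abs_pow, abs_neg,
      abs_of_nonneg ht, abs_of_nonneg hexp0.le, abs_of_nonneg hfac0.le]
    calc t ^ m * Real.exp (-u) / m.factorial *
          |u ^ (2 * m) - 2 * m * u ^ (2 * m - 1) - 2 * m * u ^ (2 * m - 2)|
        ≤ t ^ m * 1 / m.factorial * ((1 + 4 * m) * M ^ (2 * m)) := by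
          gcongr
      _ ≤ t ^ m * 1 / m.factorial * (5 ^ m * M ^ (2 * m)) := by
          have h5 := aux_le_pow5 m
          have hMp : (0:ℝ) < M ^ (2*m) := by positivity
          have htm : (0:ℝ) ≤ t ^ m / m.factorial := by positivity
          rw [mul_one]
          nlinarith [mul_le_mul_of_nonneg_right h5 hMp.le]
      _ = (5 * (t * M ^ 2)) ^ m / m.factorial := by
          rw [mul_pow, mul_pow, pow_mul]
          ring
  have hsum : Summable (fun m : ℕ => (5 * (t * M ^ 2)) ^ m / m.factorial) :=
    Real.summable_pow_div_factorial _
  have hmain : TendstoUniformlyOn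
      (fun n u => ∑ m ∈ Finset.range n, f m u)
      (fun u => ∑' m, f m u) atTop (Set.Icc a b) :=
    tendstoUniformlyOn_tsum_nat hsum hbound
  have hmain' : TendstoUniformlyOn
      (fun n u => ∑ m ∈ Finset.range (n + 1), f m u)
      (fun u => ∑' m, f m u) atTop (Set.Icc a b) := by
    intro v hv
    exact (tendsto_add_atTop_nat 1).eventually (hmain v hv)
  refine hmain'.congr_right ?_
  intro u hu
  exact aux_tsum_eq t u (lt_of_lt_of_le ha hu.1)
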